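/- Let F : ℝ × ℝ → ℝ be real analytic at (0, 0) with F(0, 0) = 0, and suppose that the order of vanishing at 0 of the function y ↦ F(0, y) is finite and odd; that is, writing F(0, y) = Σ_{k≥0} cₖ yᵏ on a neighborhood of 0, the smallest k with cₖ ≠ 0 is an odd integer. Then for every ε > 0 there exists δ > 0 such that for every real x with |x| < δ there exists a real y with |y| < ε and F(x, y) = 0. -/

import Mathlib

/-- Poincaré's continuity method: if the order of vanishing of `y ↦ F(0, y)` at `0` is
finite and odd, then for every small real `x` the equation `F(x, y) = 0` has a small
real solution `y`. -/
theorem odd_multiplicity_real_solution (F : ℝ × ℝ → ℝ)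
    (hF : AnalyticAt ℝ F (0, 0)) (hF0 : F (0, 0) = 0)
    (hodd : ∃ (p : FormalMultilinearSeries ℝ ℝ ℝ) (k : ℕ),
      HasFPowerSeriesAt (fun y => F (0, y)) p 0 ∧ Odd k ∧ p.coeff k ≠ 0 ∧
      ∀ j < k, p.coeff j = 0) :
    ∀ ε > (0 : ℝ), ∃ δ > (0 : ℝ), ∀ x : ℝ, |x| < δ →
      ∃ y : ℝ, |y| < ε ∧ F (x, y) = 0 := by
  intro ε hε
  obtain ⟨p, k, hp, hk, hck, hlow⟩ := hodd
  set g : ℝ → ℝ := fun y => F (0, y) with hgdef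
  have hpk : p k ≠ 0 := fun h0 => hck (FormalMultilinearSeries.coeff_eq_zero.mpr h0)
  have hpne : p ≠ 0 := fun h => hpk (by simp [h])
  have horder : p.order = k := by
    refine le_antisymm (Nat.sInf_le hpk) (le_of_not_gt fun hlt => ?_)
    exact p.apply_order_ne_zero hpne
      (FormalMultilinearSeries.coeff_eq_zero.mp (hlow _ hlt))
  set h : ℝ → ℝ := (Function.swap dslope 0)^[k] g with hhdef
  have hh_an : AnalyticAt ℝ h 0 :=
    ⟨_, hp.has_fpower_series_iterate_dslope_fslope k⟩
  have hh0 : h 0 ≠ 0 := by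
    have := hp.iterate_dslope_fslope_ne_zero hpne
    rwa [horder] at this
  have hfac : ∀ᶠ z in nhds (0 : ℝ), g z = z ^ k * h z := by
    have := hp.eq_pow_order_mul_iterate_dslope
    rw [horder] at this
    exact Filter.Eventually.of_forall (by simpa [smul_eq_mul] using this)
  -- h keeps the sign of h 0 near 0
  have hsign : ∀ᶠ y in nhds (0 : ℝ), 0 < h y * h 0 := by
    have hc : ContinuousAt (fun y => h y * h 0) 0 :=
      hh_an.continuousAt.mul continuousAt_const
    have h00 : (0 : ℝ) < h 0 * h 0 := mul_self_pos.mpr hh0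
    exact hc (Ioi_mem_nhds h00)
  obtain ⟨r, hr, hrP⟩ := Metric.eventually_nhds_iff.mp (hfac.and hsign)
  -- continuity of F on a ball around (0,0)
  obtain ⟨U, hUF, hUo, hU0⟩ := eventually_nhds_iff.mp hF.eventually_analyticAt
  obtain ⟨ρ, hρ, hball⟩ := Metric.isOpen_iff.mp hUo _ hU0
  set t : ℝ := min (min ε ρ) r / 2 with htdef
  have hm : 0 < min (min ε ρ) r := lt_min (lt_min hε hρ) hr
  have ht : 0 < t := by positivity
  have htm : t < min (min ε ρ) r := half_lt_self hm
  have htε : t < ε := lt_of_lt_of_le htm (le_trans (min_le_left _ _) (min_le_left _ _))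
  have htρ : t < ρ := lt_of_lt_of_le htm (le_trans (min_le_left _ _) (min_le_right _ _))
  have htr : t < r := lt_of_lt_of_le htm (min_le_right _ _)
  have hdist : ∀ y : ℝ, dist y 0 = |y| := fun y => by simp [Real.dist_eq]
  have hPt : g t = t ^ k * h t ∧ 0 < h t * h 0 := by
    apply hrP; rw [hdist, abs_of_pos ht]; exact htr
  have hPnt : g (-t) = (-t) ^ k * h (-t) ∧ 0 < h (-t) * h 0 := by
    apply hrP; rw [hdist, abs_neg, abs_of_pos ht]; exact htr
  have hht : 0 < h (-t) * h t := by
    have h1 := mul_pos hPnt.2 hPt.2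
    have h00 : (0 : ℝ) < h 0 * h 0 := mul_self_pos.mpr hh0
    nlinarith
  have hprod : g (-t) * g t < 0 := by
    rw [hPnt.1, hPt.1, Odd.neg_pow hk]
    have htk : 0 < t ^ k := pow_pos ht k
    nlinarith [mul_pos (mul_pos htk htk) hht]
  -- points (0, ±t) are in the ball
  have hmem : ∀ x y : ℝ, |x| < ρ → |y| ≤ t → (x, y) ∈ Metric.ball ((0 : ℝ), (0 : ℝ)) ρ := by
    intro x y hx hy
    rw [Metric.mem_ball, Prod.dist_eq]
    simp only [hdist]
    exact max_lt hx (lt_of_le_of_lt hy htρ)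
  have hcont : ∀ x y : ℝ, |x| < ρ → |y| ≤ t → ContinuousAt F (x, y) := by
    intro x y hx hy
    exact (hUF _ (hball (hmem x y hx hy))).continuousAt
  -- the product F(x,-t) * F(x,t) is continuous in x and negative at x = 0
  have hφ : ContinuousAt (fun x : ℝ => F (x, -t) * F (x, t)) 0 := by
    have hc : ContinuousAt (fun x : ℝ => (x, -t)) 0 :=
      (continuous_id.prodMk continuous_const).continuousAt
    have hc' : ContinuousAt (fun x : ℝ => (x, t)) 0 :=
      (continuous_id.prodMk continuous_const).continuousAt
    have c1 : ContinuousAt (fun x : ℝ => F (x, -t)) 0 :=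
      ContinuousAt.comp (hcont 0 (-t) (by simpa using hρ) (by rw [abs_neg, abs_of_pos ht])) hc
    have c2 : ContinuousAt (fun x : ℝ => F (x, t)) 0 :=
      ContinuousAt.comp (hcont 0 t (by simpa using hρ) (by rw [abs_of_pos ht])) hc'
    exact c1.mul c2
  have hφ0 : (fun x : ℝ => F (x, -t) * F (x, t)) 0 < 0 := hprod
  have hev : ∀ᶠ x in nhds (0 : ℝ), F (x, -t) * F (x, t) < 0 :=
    hφ (Iio_mem_nhds hφ0)
  obtain ⟨δ₁, hδ₁, hδ₁P⟩ := Metric.eventually_nhds_iff.mp hev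
  refine ⟨min δ₁ ρ, lt_min hδ₁ hρ, fun x hx => ?_⟩
  have hxδ₁ : |x| < δ₁ := lt_of_lt_of_le hx (min_le_left _ _)
  have hxρ : |x| < ρ := lt_of_lt_of_le hx (min_le_right _ _)
  have hneg : F (x, -t) * F (x, t) < 0 := hδ₁P (by rwa [hdist])
  have hcx : ContinuousOn (fun y : ℝ => F (x, y)) (Set.uIcc (-t) t) := by
    intro y hy
    rw [Set.uIcc_of_le (neg_le_self ht.le), Set.mem_Icc] at hy
    exact ((hcont x y hxρ (abs_le.mpr hy)).comp
      (continuous_const.prodMk continuous_id).continuousAt).continuousWithinAt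
  have hmemI : (0 : ℝ) ∈ Set.uIcc (F (x, -t)) (F (x, t)) := by
    rcases mul_neg_iff.mp hneg with ⟨h1, h2⟩ | ⟨h1, h2⟩
    · exact Set.mem_uIcc.mpr (Or.inr ⟨h2.le, h1.le⟩)
    · exact Set.mem_uIcc.mpr (Or.inl ⟨h1.le, h2.le⟩)
  obtain ⟨y, hyI, hy0⟩ := intermediate_value_uIcc hcx hmemI
  refine ⟨y, ?_, hy0⟩
  rw [Set.uIcc_of_le (neg_le_self ht.le), Set.mem_Icc] at hyI
  exact lt_of_le_of_lt (abs_le.mpr hyI) htε
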